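/- Let (p(t), q(t, ·)) solve the forward equations of the continuum seed-bank single-line process: dp/dt = -c·p(t) + ∫ λ q(t,dλ), and q(t, dλ) = e^{-λt} q(0, dλ) + (∫_0^t e^{-λs} p(t-s) ds)·μ(dλ), with p(t) + ‖q(t,·)‖_{TV} = 1 and p continuous with lim_{t→∞} p(t) = 1/(1 + ∫ (1/λ) μ(dλ)). If ∫_{(0,∞)} (1/λ) μ(dλ) < ∞, then for every Borel set B ⊆ (0,∞), lim_{t→∞} q(t, B) = (1/(1 + ∫ (1/λ) μ(dλ))) · ∫_B (1/λ) μ(dλ). -/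

import Mathlib

open MeasureTheory Filter intervalIntegral

private lemma exp_int_aux (l a b : ℝ) (hl : l ≠ 0) :
    ∫ s in a..b, Real.exp (-l * s) = (Real.exp (-l * a) - Real.exp (-l * b)) / l := by
  have hd : ∀ s : ℝ, HasDerivAt (fun x => -Real.exp (-l * x) / l) (Real.exp (-l * s)) s := by
    intro s
    have h1 : HasDerivAt (fun x : ℝ => -l * x) (-l) s := by
      simpa using (hasDerivAt_id s).const_mul (-l)
    have h2 := ((Real.hasDerivAt_exp (-l * s)).comp s h1).div_const l
    have h3 := h2.neg
    convert h3 using 1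
    · rfl
    · rfl
    · ext x; simp [Function.comp, neg_div]
    · rw [mul_neg, neg_div, neg_neg, mul_div_assoc, div_self hl, mul_one]
  rw [intervalIntegral.integral_eq_sub_of_hasDerivAt (fun s _ => hd s)
    (by apply Continuous.intervalIntegrable; continuity)]
  ring


private lemma exp_II (l t a b : ℝ) (f : ℝ → ℝ) (hf : Measurable f) (hbd : ∀ x, |f x| ≤ 1) :
    IntervalIntegrable (fun s => Real.exp (-l * s) * f (t - s)) MeasureTheory.volume a b := by
  rw [intervalIntegrable_iff]
  have hmeas : MeasureTheory.AEStronglyMeasurable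
      (fun s => Real.exp (-l * s) * f (t - s)) (MeasureTheory.volume.restrict (Set.uIoc a b)) :=
    (Measurable.aestronglyMeasurable (by fun_prop))
  have hco : MeasureTheory.IntegrableOn (fun _ : ℝ => Real.exp (|l| * max |a| |b|))
      (Set.uIoc a b) MeasureTheory.volume := by
    exact MeasureTheory.integrableOn_const (by rw [Set.uIoc]; exact measure_Ioc_lt_top.ne)
  refine MeasureTheory.Integrable.mono' hco hmeas ?_
  refine (MeasureTheory.ae_restrict_mem measurableSet_uIoc).mono fun s hs => ?_
  have hs' : |s| ≤ max |a| |b| := by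
    rcases le_total a b with h | h
    · rw [Set.uIoc_of_le h] at hs
      exact abs_le_max_abs_abs (le_of_lt hs.1) hs.2
    · rw [Set.uIoc_of_ge h] at hs
      exact (abs_le_max_abs_abs (le_of_lt hs.1) hs.2).trans (by rw [max_comm])
  have h1 : -l * s ≤ |l| * max |a| |b| := by
    calc -l * s ≤ |(-l) * s| := le_abs_self _
    _ = |l| * |s| := by rw [abs_mul, abs_neg]
    _ ≤ |l| * max |a| |b| := by
        exact mul_le_mul_of_nonneg_left hs' (abs_nonneg l)
  calc ‖Real.exp (-l * s) * f (t - s)‖ = Real.exp (-l * s) * |f (t - s)| := by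
        rw [norm_mul, Real.norm_eq_abs, Real.abs_exp, Real.norm_eq_abs]
  _ ≤ Real.exp (-l * s) * 1 := mul_le_mul_of_nonneg_left (hbd _) (Real.exp_pos _).le
  _ ≤ Real.exp (|l| * max |a| |b|) := by rw [mul_one]; exact Real.exp_le_exp.2 h1

open MeasureTheory Filter in
private lemma key_lim (p : ℝ → ℝ) (hpm : Measurable p) (hp01 : ∀ t, p t ∈ Set.Icc (0:ℝ) 1)
    (P : ℝ) (hP0 : 0 ≤ P) (hP1 : P ≤ 1)
    (hplim : Tendsto p atTop (nhds P)) (l : ℝ) (hl : 0 < l) :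
    Tendsto (fun t => ∫ s in (0:ℝ)..t, Real.exp (-l * s) * p (t - s))
      atTop (nhds (P / l)) := by
  rw [Metric.tendsto_atTop]
  intro ε hε
  obtain ⟨T₀, hT₀⟩ := Metric.tendsto_atTop.1 hplim (ε * l / 4) (by positivity)
  set T := max T₀ 0 with hTdef
  have hT0 : (0:ℝ) ≤ T := le_max_right _ _
  have hT : ∀ u, T ≤ u → |p u - P| < ε * l / 4 := fun u hu => by
    have := hT₀ u ((le_max_left _ _).trans hu)
    rwa [Real.dist_eq] at this
  have hexp : Tendsto (fun t : ℝ => Real.exp (-l * t)) atTop (nhds 0) := by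
    apply Real.tendsto_exp_atBot.comp
    have h1 : Tendsto (fun t : ℝ => l * t) atTop atTop :=
      Tendsto.const_mul_atTop hl tendsto_id
    have h2 : Tendsto (fun t : ℝ => -(l * t)) atTop atBot := tendsto_neg_atTop_atBot.comp h1
    have h3 := h2
    convert h3 using 2
    ring
  have htail : Tendsto (fun t => T * Real.exp (-l * (t - T)) + Real.exp (-l * t) / l)
      atTop (nhds 0) := by
    have h3 : Tendsto (fun t : ℝ => Real.exp (-l * (t - T))) atTop (nhds 0) := by
      have h4 := hexp.comp (tendsto_atTop_add_const_right atTop (-T) tendsto_id)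
      exact h4.congr fun x => by simp [Function.comp, sub_eq_add_neg]
    have := (h3.const_mul T).add (hexp.div_const l)
    simpa using this
  obtain ⟨N₁, hN₁⟩ := Metric.tendsto_atTop.1 htail (ε / 2) (by positivity)
  refine ⟨max T N₁, fun t ht => ?_⟩
  have htT : T ≤ t := (le_max_left _ _).trans ht
  have ht0 : (0:ℝ) ≤ t := hT0.trans htT
  have htN : N₁ ≤ t := (le_max_right _ _).trans ht
  have hA : ∀ a b : ℝ, IntervalIntegrable (fun s => Real.exp (-l * s) * (p (t - s) - P))
      volume a b := fun a b =>
    exp_II l t a b (fun u => p u - P) (hpm.sub measurable_const) (fun u => by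
      have h := hp01 u
      rw [Set.mem_Icc] at h
      have habs : |p u - P| ≤ 1 := abs_le.2 ⟨by linarith [h.1], by linarith [h.2]⟩
      simpa using habs)
  have hB' : IntervalIntegrable (fun s => Real.exp (-l * s) * P) volume 0 t :=
    Continuous.intervalIntegrable
      ((Real.continuous_exp.comp (continuous_const.mul continuous_id)).mul continuous_const) 0 t
  have hdec : (∫ s in (0:ℝ)..t, Real.exp (-l * s) * p (t - s))
      = (∫ s in (0:ℝ)..t, Real.exp (-l * s) * (p (t - s) - P))
        + (∫ s in (0:ℝ)..t, Real.exp (-l * s) * P) := by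
    rw [← intervalIntegral.integral_add (hA 0 t) hB']
    apply intervalIntegral.integral_congr
    intro s _
    ring
  have hval : (∫ s in (0:ℝ)..t, Real.exp (-l * s) * P)
      = (1 - Real.exp (-l * t)) / l * P := by
    rw [intervalIntegral.integral_mul_const, exp_int_aux l 0 t hl.ne']
    norm_num
  have hsplit : (∫ s in (0:ℝ)..t, Real.exp (-l * s) * (p (t - s) - P))
      = (∫ s in (0:ℝ)..(t - T), Real.exp (-l * s) * (p (t - s) - P))
        + (∫ s in (t - T)..t, Real.exp (-l * s) * (p (t - s) - P)) :=
    (intervalIntegral.integral_add_adjacent_intervals (hA 0 (t - T)) (hA (t - T) t)).symm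
  have hE1 : |∫ s in (0:ℝ)..(t - T), Real.exp (-l * s) * (p (t - s) - P)| ≤ ε / 4 := by
    have hb : ∀ᵐ s ∂volume.restrict (Set.uIoc (0:ℝ) (t - T)),
        ‖Real.exp (-l * s) * (p (t - s) - P)‖ ≤ ε * l / 4 * Real.exp (-l * s) := by
      refine (ae_restrict_mem measurableSet_uIoc).mono fun s hs => ?_
      rw [Set.uIoc_of_le (by linarith), Set.mem_Ioc] at hs
      have hTs : T ≤ t - s := by linarith [hs.2]
      have hp := (hT _ hTs).le
      rw [norm_mul, Real.norm_eq_abs, Real.abs_exp, Real.norm_eq_abs, mul_comm (ε * l / 4)]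
      exact mul_le_mul_of_nonneg_left hp (Real.exp_pos _).le
    have hgi : IntervalIntegrable (fun s => ε * l / 4 * Real.exp (-l * s)) volume 0 (t - T) :=
      Continuous.intervalIntegrable
        (continuous_const.mul (Real.continuous_exp.comp (continuous_const.mul continuous_id))) _ _
    have h1 := intervalIntegral.norm_integral_le_abs_of_norm_le hb hgi
    rw [Real.norm_eq_abs] at h1
    refine h1.trans ?_
    rw [intervalIntegral.integral_const_mul, exp_int_aux l 0 (t - T) hl.ne']
    rw [abs_of_nonneg]
    · have he : Real.exp (-l * 0) = 1 := by norm_num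
      rw [he]
      have hring : ε * l / 4 * ((1 - Real.exp (-l * (t - T))) / l) =
          ε * (1 - Real.exp (-l * (t - T))) / 4 := by
        field_simp
      rw [hring]
      nlinarith [Real.exp_pos (-l * (t - T))]
    · have he : Real.exp (-l * 0) = 1 := by norm_num
      rw [he]
      have h2 : Real.exp (-l * (t - T)) ≤ 1 := by
        rw [Real.exp_le_one_iff]
        nlinarith
      exact mul_nonneg (by positivity) (div_nonneg (by linarith) hl.le)
  have hE2 : |∫ s in (t - T)..t, Real.exp (-l * s) * (p (t - s) - P)|
      ≤ T * Real.exp (-l * (t - T)) := by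
    have hb : ∀ x ∈ Set.uIoc (t - T) t,
        ‖Real.exp (-l * x) * (p (t - x) - P)‖ ≤ Real.exp (-l * (t - T)) := by
      intro x hx
      rw [Set.uIoc_of_le (by linarith), Set.mem_Ioc] at hx
      have h := hp01 (t - x)
      rw [Set.mem_Icc] at h
      have habs : |p (t - x) - P| ≤ 1 := abs_le.2 ⟨by linarith [h.1], by linarith [h.2]⟩
      have hle : Real.exp (-l * x) ≤ Real.exp (-l * (t - T)) := by
        apply Real.exp_le_exp.2
        nlinarith [hx.1]
      calc ‖Real.exp (-l * x) * (p (t - x) - P)‖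
          = Real.exp (-l * x) * |p (t - x) - P| := by
            rw [norm_mul, Real.norm_eq_abs, Real.abs_exp, Real.norm_eq_abs]
        _ ≤ Real.exp (-l * x) * 1 := mul_le_mul_of_nonneg_left habs (Real.exp_pos _).le
        _ ≤ Real.exp (-l * (t - T)) := by rw [mul_one]; exact hle
    have h1 := intervalIntegral.norm_integral_le_of_norm_le_const hb
    rw [Real.norm_eq_abs] at h1
    refine h1.trans ?_
    have : |t - (t - T)| = T := by
      rw [abs_of_nonneg (by linarith)]
      ring
    rw [this, mul_comm]
  have hE3 : |(1 - Real.exp (-l * t)) / l * P - P / l| ≤ Real.exp (-l * t) / l := by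
    have heq : (1 - Real.exp (-l * t)) / l * P - P / l = -(P * (Real.exp (-l * t) / l)) := by
      field_simp
      ring
    rw [heq, abs_neg, abs_of_nonneg (by positivity)]
    calc P * (Real.exp (-l * t) / l) ≤ 1 * (Real.exp (-l * t) / l) :=
          mul_le_mul_of_nonneg_right hP1 (by positivity)
      _ = Real.exp (-l * t) / l := one_mul _
  have htailb : T * Real.exp (-l * (t - T)) + Real.exp (-l * t) / l < ε / 2 := by
    have h := hN₁ t htN
    rw [Real.dist_eq, sub_zero] at h
    exact (le_abs_self _).trans_lt h
  rw [Real.dist_eq, hdec, hsplit, hval]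
  have habs2 : |(∫ s in (0:ℝ)..(t - T), Real.exp (-l * s) * (p (t - s) - P))
      + (∫ s in (t - T)..t, Real.exp (-l * s) * (p (t - s) - P))
      + (1 - Real.exp (-l * t)) / l * P - P / l|
      ≤ |∫ s in (0:ℝ)..(t - T), Real.exp (-l * s) * (p (t - s) - P)|
        + |∫ s in (t - T)..t, Real.exp (-l * s) * (p (t - s) - P)|
        + |(1 - Real.exp (-l * t)) / l * P - P / l| := by
    have h1 := abs_add_le ((∫ s in (0:ℝ)..(t - T), Real.exp (-l * s) * (p (t - s) - P))
      + (∫ s in (t - T)..t, Real.exp (-l * s) * (p (t - s) - P)))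
      ((1 - Real.exp (-l * t)) / l * P - P / l)
    have h2 := abs_add_le (∫ s in (0:ℝ)..(t - T), Real.exp (-l * s) * (p (t - s) - P))
      (∫ s in (t - T)..t, Real.exp (-l * s) * (p (t - s) - P))
    calc |(∫ s in (0:ℝ)..(t - T), Real.exp (-l * s) * (p (t - s) - P))
        + (∫ s in (t - T)..t, Real.exp (-l * s) * (p (t - s) - P))
        + (1 - Real.exp (-l * t)) / l * P - P / l|
        = |((∫ s in (0:ℝ)..(t - T), Real.exp (-l * s) * (p (t - s) - P))
          + (∫ s in (t - T)..t, Real.exp (-l * s) * (p (t - s) - P)))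
          + ((1 - Real.exp (-l * t)) / l * P - P / l)| := by rw [add_sub_assoc]
      _ ≤ _ := h1.trans (by linarith)
  calc |(∫ s in (0:ℝ)..(t - T), Real.exp (-l * s) * (p (t - s) - P))
      + (∫ s in (t - T)..t, Real.exp (-l * s) * (p (t - s) - P))
      + (1 - Real.exp (-l * t)) / l * P - P / l| ≤ _ := habs2
    _ < ε := by linarith

/-- Limiting distribution of the ancestral line: if `∫ (1/λ) μ(dλ) < ∞` and
`q(t,·)` is given by the variation-of-constants representation
`q(t,dλ) = e^{-λt} q(0,dλ) + (∫_0^t e^{-λs} p(t-s) ds)·μ(dλ)` with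
`p(t) → 1/(1+∫(1/λ)μ(dλ))`, then for every Borel `B ⊆ (0,∞)`,
`q(t,B) → (1/(1+∫(1/λ)μ(dλ)))·∫_B (1/λ) μ(dλ)` as `t → ∞`. -/
theorem stmt_9 (μ q0 : Measure ℝ) [IsFiniteMeasure μ] [IsFiniteMeasure q0]
    (c : ℝ) (hc : 0 < c) (hcμ : (μ Set.univ).toReal = c)
    (hμ0 : μ (Set.Iic 0) = 0) (hq00 : q0 (Set.Iic 0) = 0) (hq0sub : q0 Set.univ ≤ 1)
    (hint : IntegrableOn (fun l => 1 / l) (Set.Ioi 0) μ)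
    (I : ℝ) (hI : I = ∫ l in Set.Ioi (0 : ℝ), 1 / l ∂μ)
    (p : ℝ → ℝ) (hpm : Measurable p) (hp01 : ∀ t, p t ∈ Set.Icc (0 : ℝ) 1)
    (hplim : Filter.Tendsto p Filter.atTop (nhds (1 / (1 + I))))
    (q : ℝ → Set ℝ → ℝ)
    (hq : ∀ t, 0 ≤ t → ∀ B, MeasurableSet B → B ⊆ Set.Ioi 0 →
      q t B = (∫ l in B, Real.exp (-l * t) ∂q0)
        + ∫ l in B, (∫ s in (0 : ℝ)..t, Real.exp (-l * s) * p (t - s)) ∂μ) :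
    ∀ B, MeasurableSet B → B ⊆ Set.Ioi 0 →
      Filter.Tendsto (fun t => q t B) Filter.atTop
        (nhds ((1 / (1 + I)) * ∫ l in B, 1 / l ∂μ)) := by
  intro B hB hBsub
  set P : ℝ := 1 / (1 + I) with hPdef
  have hI0 : 0 ≤ I := by
    rw [hI]
    apply setIntegral_nonneg measurableSet_Ioi
    intro x hx
    have : (0:ℝ) < x := hx
    positivity
  have h1I : (0:ℝ) < 1 + I := by linarith
  have hP0 : 0 ≤ P := by positivity
  have hP1 : P ≤ 1 := by
    rw [hPdef, div_le_one h1I]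
    linarith
  have hA : Tendsto (fun t => ∫ l in B, Real.exp (-l * t) ∂q0) atTop (nhds 0) := by
    have h0 : nhds (0:ℝ) = nhds (∫ l in B, (0:ℝ) ∂q0) := by simp
    rw [h0]
    apply MeasureTheory.tendsto_integral_filter_of_dominated_convergence (bound := fun _ => (1:ℝ))
    · exact Eventually.of_forall fun t => Measurable.aestronglyMeasurable (by fun_prop)
    · filter_upwards [eventually_ge_atTop (0:ℝ)] with t ht
      filter_upwards [ae_restrict_mem hB] with x hx
      have hx0 : 0 < x := hBsub hx
      rw [Real.norm_eq_abs, Real.abs_exp]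
      rw [Real.exp_le_one_iff]
      nlinarith
    · exact integrable_const 1
    · filter_upwards [ae_restrict_mem hB] with x hx
      have hx0 : 0 < x := hBsub hx
      have h1 : Tendsto (fun t : ℝ => x * t) atTop atTop :=
        Tendsto.const_mul_atTop hx0 tendsto_id
      have h2 : Tendsto (fun t : ℝ => -(x * t)) atTop atBot :=
        tendsto_neg_atTop_atBot.comp h1
      have h3 := Real.tendsto_exp_atBot.comp h2
      exact h3.congr fun t => by simp [Function.comp, neg_mul]
  have hC : Tendsto (fun t => ∫ l in B, (∫ s in (0:ℝ)..t, Real.exp (-l * s) * p (t - s)) ∂μ)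
      atTop (nhds (∫ l in B, P / l ∂μ)) := by
    apply MeasureTheory.tendsto_integral_filter_of_dominated_convergence (bound := fun l => 1 / l)
    · filter_upwards [eventually_ge_atTop (0:ℝ)] with t ht
      have heq : (fun l => ∫ s in (0:ℝ)..t, Real.exp (-l * s) * p (t - s))
          = fun l => ∫ s in Set.Ioc (0:ℝ) t, Real.exp (-l * s) * p (t - s) := by
        funext l
        rw [intervalIntegral.integral_of_le ht]
      rw [heq]
      apply StronglyMeasurable.aestronglyMeasurable
      exact MeasureTheory.StronglyMeasurable.integral_prod_right
        (f := fun l s => Real.exp (-l * s) * p (t - s))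
        (Measurable.stronglyMeasurable (by fun_prop))
    · filter_upwards [eventually_ge_atTop (0:ℝ)] with t ht
      filter_upwards [ae_restrict_mem hB] with x hx
      have hx0 : 0 < x := hBsub hx
      have hb : ∀ᵐ s ∂volume.restrict (Set.uIoc (0:ℝ) t),
          ‖Real.exp (-x * s) * p (t - s)‖ ≤ Real.exp (-x * s) := by
        refine Eventually.of_forall fun s => ?_
        have h := hp01 (t - s)
        rw [Set.mem_Icc] at h
        calc ‖Real.exp (-x * s) * p (t - s)‖ = Real.exp (-x * s) * |p (t - s)| := by
              rw [norm_mul, Real.norm_eq_abs, Real.abs_exp, Real.norm_eq_abs]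
          _ ≤ Real.exp (-x * s) * 1 := by
              apply mul_le_mul_of_nonneg_left _ (Real.exp_pos _).le
              rw [abs_le]
              exact ⟨by linarith [h.1], h.2⟩
          _ = Real.exp (-x * s) := mul_one _
      have hgi : IntervalIntegrable (fun s => Real.exp (-x * s)) volume 0 t :=
        Continuous.intervalIntegrable
          (Real.continuous_exp.comp (continuous_const.mul continuous_id)) 0 t
      have h1 := intervalIntegral.norm_integral_le_abs_of_norm_le hb hgi
      rw [exp_int_aux x 0 t hx0.ne'] at h1
      refine h1.trans ?_
      have he0 : Real.exp (-x * 0) = 1 := by norm_num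
      rw [he0]
      have he1 : Real.exp (-x * t) ≤ 1 := by
        rw [Real.exp_le_one_iff]
        nlinarith
      rw [abs_of_nonneg (div_nonneg (by linarith) hx0.le)]
      rw [div_le_div_iff₀ hx0 hx0]
      nlinarith [Real.exp_pos (-x * t)]
    · exact hint.mono_set hBsub
    · filter_upwards [ae_restrict_mem hB] with x hx
      exact key_lim p hpm hp01 P hP0 hP1 hplim x (hBsub hx)
  have hq' : (fun t => (∫ l in B, Real.exp (-l * t) ∂q0)
      + ∫ l in B, (∫ s in (0:ℝ)..t, Real.exp (-l * s) * p (t - s)) ∂μ)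
      =ᶠ[atTop] fun t => q t B := by
    filter_upwards [eventually_ge_atTop (0:ℝ)] with t ht
    exact (hq t ht B hB hBsub).symm
  have hfinal := hA.add hC
  rw [zero_add] at hfinal
  have hval : (∫ l in B, P / l ∂μ) = P * ∫ l in B, 1 / l ∂μ := by
    rw [← MeasureTheory.integral_const_mul]
    congr 1
    funext x
    ring
  rw [hval] at hfinal
  exact hfinal.congr' hq'
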